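/- The six invariants f1,…,f6 form a separating set for ker D: if p1, p2 ∈ k^5 satisfy f_i(p1) = f_i(p2) for i = 1,…,6, then f(p1) = f(p2) for every f ∈ ker D, where D = x^3 ∂/∂s + s ∂/∂t + t ∂/∂u + x^2 ∂/∂v on k[x,s,t,u,v]. -/

import Mathlib

open MvPolynomial

noncomputable section DFAux

variable {K : Type*} [Field K] [CharZero K]

instance mvPolyFin5CharZero : CharZero (MvPolynomial (Fin 5) K) :=
  ⟨fun m n h => by
    have : ((m : K)) = n := by simpa using congrArg (MvPolynomial.constantCoeff) h
    exact_mod_cast this⟩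

instance : NoZeroSMulDivisors ℤ (MvPolynomial (Fin 5) K) :=
  inferInstance

/-- The coordinates of the flow of the derivation, with time parameter `Polynomial.X`. -/
def flowPoly (K : Type*) [Field K] [CharZero K] : Fin 5 → Polynomial (MvPolynomial (Fin 5) K) :=
  ![Polynomial.C (X 0),
    Polynomial.C (X 1) + Polynomial.C (X 0 ^ 3) * Polynomial.X,
    Polynomial.C (X 2) + Polynomial.C (X 1) * Polynomial.X
      + Polynomial.C (MvPolynomial.C (2⁻¹ : K) * X 0 ^ 3) * Polynomial.X ^ 2,
    Polynomial.C (X 3) + Polynomial.C (X 2) * Polynomial.X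
      + Polynomial.C (MvPolynomial.C (2⁻¹ : K) * X 1) * Polynomial.X ^ 2
      + Polynomial.C (MvPolynomial.C (6⁻¹ : K) * X 0 ^ 3) * Polynomial.X ^ 3,
    Polynomial.C (X 4) + Polynomial.C (X 0 ^ 2) * Polynomial.X]

theorem derivative_flowPoly (i : Fin 5) :
    Polynomial.derivative (flowPoly K i) =
      aeval (flowPoly K) (![0, X 0 ^ 3, X 1, X 2, X 0 ^ 2] i : MvPolynomial (Fin 5) K) := by
  have hC2 : (Polynomial.C (MvPolynomial.C ((1:K)/2)) : Polynomial (MvPolynomial (Fin 5) K))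
      * Polynomial.C 2 = 1 := by
    rw [← map_ofNat (MvPolynomial.C (σ := Fin 5)) 2, ← map_mul, ← map_mul]
    norm_num
  have hC6 : (Polynomial.C (MvPolynomial.C ((1:K)/6)) : Polynomial (MvPolynomial (Fin 5) K))
      * Polynomial.C 3 = Polynomial.C (MvPolynomial.C ((1:K)/2)) := by
    rw [← map_ofNat (MvPolynomial.C (σ := Fin 5)) 3, ← map_mul, ← map_mul]
    norm_num
  fin_cases i <;>
    simp [flowPoly, Polynomial.derivative_pow, map_mul, map_pow] <;>
    ring_nf
  · linear_combination (Polynomial.C (X 0 : MvPolynomial (Fin 5) K) ^ 3 * Polynomial.X) * hC2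
  · linear_combination (Polynomial.C (X 1 : MvPolynomial (Fin 5) K) * Polynomial.X) * hC2
      + (Polynomial.X ^ 2 * Polynomial.C (X 0 : MvPolynomial (Fin 5) K) ^ 3) * hC6

variable (D : Derivation K (MvPolynomial (Fin 5) K) (MvPolynomial (Fin 5) K))
  (hx : D (X 0) = 0) (hs : D (X 1) = X 0 ^ 3) (ht : D (X 2) = X 1)
  (hu : D (X 3) = X 2) (hv : D (X 4) = X 0 ^ 2)

include hx hs ht hu hv in
theorem derivative_aeval_flowPoly (f : MvPolynomial (Fin 5) K) :
    Polynomial.derivative (aeval (flowPoly K) f) = aeval (flowPoly K) (D f) := by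
  have hDX : ∀ i : Fin 5,
      D (X i) = (![0, X 0 ^ 3, X 1, X 2, X 0 ^ 2] i : MvPolynomial (Fin 5) K) := by
    intro i; fin_cases i <;> simp [hx, hs, ht, hu, hv]
  induction f using MvPolynomial.induction_on with
  | C a =>
      rw [show (MvPolynomial.C a : MvPolynomial (Fin 5) K) = algebraMap K _ a from rfl,
        Derivation.map_algebraMap, map_zero, AlgHom.commutes]
      simp [Polynomial.algebraMap_apply]
  | add p q hp hq => simp [map_add, hp, hq]
  | mul_X p i hp =>
      have hXi : aeval (flowPoly K) (X i : MvPolynomial (Fin 5) K) = flowPoly K i :=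
        aeval_X _ _
      rw [map_mul, Polynomial.derivative_mul, hp, hXi, Derivation.leibniz, map_add,
        smul_eq_mul, smul_eq_mul, map_mul, map_mul, hXi, hDX i, ← derivative_flowPoly i]
      ring

include hx hs ht hu hv in
theorem flow_master (f : MvPolynomial (Fin 5) K) (hf : D f = 0) :
    aeval (flowPoly K) f = Polynomial.C f := by
  have hd : Polynomial.derivative (aeval (flowPoly K) f) = 0 := by
    rw [derivative_aeval_flowPoly D hx hs ht hu hv f, hf, map_zero]
  have h0 : ∀ g : MvPolynomial (Fin 5) K,
      Polynomial.eval 0 (aeval (flowPoly K) g) = g := by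
    intro g
    have : (Polynomial.evalRingHom (0 : MvPolynomial (Fin 5) K)).comp
        ((aeval (flowPoly K) : MvPolynomial (Fin 5) K →ₐ[K] _) :
          MvPolynomial (Fin 5) K →+* _)
        = RingHom.id (MvPolynomial (Fin 5) K) := by
      apply MvPolynomial.ringHom_ext
      · intro a; simp [Polynomial.algebraMap_apply]
      · intro i; fin_cases i <;> simp [flowPoly]
    exact congrArg (fun φ => φ g) this
  rw [Polynomial.eq_C_of_derivative_eq_zero hd, Polynomial.coeff_zero_eq_eval_zero, h0]

/-- The flow on points of `K^5`. -/
def flowK (c : K) (r : Fin 5 → K) : Fin 5 → K :=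
  ![r 0,
    r 1 + r 0 ^ 3 * c,
    r 2 + r 1 * c + 2⁻¹ * r 0 ^ 3 * c ^ 2,
    r 3 + r 2 * c + 2⁻¹ * r 1 * c ^ 2 + 6⁻¹ * r 0 ^ 3 * c ^ 3,
    r 4 + r 0 ^ 2 * c]

include hx hs ht hu hv in
theorem flow_eval (f : MvPolynomial (Fin 5) K) (hf : D f = 0) (c : K) (r : Fin 5 → K) :
    eval (flowK c r) f = eval r f := by
  have hcomp : (Polynomial.eval₂RingHom (MvPolynomial.eval r : MvPolynomial (Fin 5) K →+* K)
        c).comp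
        ((aeval (flowPoly K) : MvPolynomial (Fin 5) K →ₐ[K] _) : MvPolynomial (Fin 5) K →+* _)
      = (MvPolynomial.eval (flowK c r) : MvPolynomial (Fin 5) K →+* K) := by
    apply MvPolynomial.ringHom_ext
    · intro a; simp [Polynomial.algebraMap_apply]
    · intro i
      fin_cases i <;> simp [flowPoly, flowK, Polynomial.eval₂_pow] <;> ring_nf
  have h := congrArg (fun φ => φ f) hcomp
  simp only [RingHom.comp_apply, RingHom.coe_coe] at h
  rw [← h, flow_master D hx hs ht hu hv f hf]
  simp

theorem eval_aeval_curve (A : Fin 5 → Polynomial K) (f : MvPolynomial (Fin 5) K) (ε : K) :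
    Polynomial.eval ε (aeval A f) = eval (fun i => Polynomial.eval ε (A i)) f := by
  induction f using MvPolynomial.induction_on with
  | C a => simp [Polynomial.algebraMap_apply]
  | add p q hp hq => simp [hp, hq]
  | mul_X p i hp => simp [hp]

theorem derivative_aeval_vcurve (A : Fin 5 → Polynomial K) (h4 : A 4 = Polynomial.X)
    (hA : ∀ i : Fin 5, i ≠ 4 → Polynomial.derivative (A i) = 0) (f : MvPolynomial (Fin 5) K) :
    Polynomial.derivative (aeval A f) = aeval A (pderiv 4 f) := by
  induction f using MvPolynomial.induction_on with
  | C a => simp [Polynomial.algebraMap_apply]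
  | add p q hp hq => simp [hp, hq]
  | mul_X p i hp =>
      by_cases hi : i = (4 : Fin 5)
      · subst hi
        rw [map_mul, Polynomial.derivative_mul, hp, pderiv_mul, pderiv_X_self]
        simp [h4]
      · rw [map_mul, Polynomial.derivative_mul, hp, pderiv_mul, pderiv_X_of_ne hi]
        simp [hA i hi]

theorem pderiv_pderiv_comm (i j : Fin 5) (f : MvPolynomial (Fin 5) K) :
    pderiv i (pderiv j f) = pderiv j (pderiv i f) := by
  induction f using MvPolynomial.induction_on with
  | C a => simp
  | add p q hp hq => simp [hp, hq]
  | mul_X p n hp =>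
      have h0 : ∀ k l : Fin 5, pderiv k (pderiv l (X n : MvPolynomial (Fin 5) K)) = 0 := by
        intro k l
        rcases eq_or_ne n l with rfl | h
        · simp [pderiv_X_self]
        · simp [pderiv_X_of_ne h]
      simp only [pderiv_mul, map_add, hp, h0, mul_zero, add_zero]
      ring

include hx hs ht hu hv in
theorem D_expand (f : MvPolynomial (Fin 5) K) :
    D f = X 0 ^ 3 * pderiv 1 f + X 1 * pderiv 2 f + X 2 * pderiv 3 f
      + X 0 ^ 2 * pderiv 4 f := by
  have hD : D = (X 0 ^ 3 : MvPolynomial (Fin 5) K) • (pderiv 1)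
      + (X 1 : MvPolynomial (Fin 5) K) • (pderiv 2)
      + (X 2 : MvPolynomial (Fin 5) K) • (pderiv 3)
      + (X 0 ^ 2 : MvPolynomial (Fin 5) K) • (pderiv 4) := by
    apply MvPolynomial.derivation_ext
    intro i
    fin_cases i <;>
      simp [hx, hs, ht, hu, hv, pderiv_X, Pi.single_apply]
  rw [hD]
  simp [smul_eq_mul]

include hx hs ht hu hv in
theorem D_pderiv (k : Fin 5) (hk : pderiv k (X 0 : MvPolynomial (Fin 5) K) = 0 ∧
      pderiv k (X 1 : MvPolynomial (Fin 5) K) = 0 ∧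
      pderiv k (X 2 : MvPolynomial (Fin 5) K) = 0)
    (f : MvPolynomial (Fin 5) K) (hf : D f = 0) : D (pderiv k f) = 0 := by
  obtain ⟨hk0, hk1, hk2⟩ := hk
  have h1 : (0 : MvPolynomial (Fin 5) K)
      = pderiv k (X 0 ^ 3 * pderiv 1 f + X 1 * pderiv 2 f + X 2 * pderiv 3 f
        + X 0 ^ 2 * pderiv 4 f) := by
    rw [← D_expand D hx hs ht hu hv f, hf, map_zero]
  simp only [map_add, pderiv_mul, pderiv_pow, hk0, hk1, hk2, mul_zero, zero_mul, add_zero,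
    zero_add, mul_assoc] at h1
  rw [pderiv_pderiv_comm k 1 f, pderiv_pderiv_comm k 2 f, pderiv_pderiv_comm k 3 f,
    pderiv_pderiv_comm k 4 f] at h1
  rw [D_expand D hx hs ht hu hv (pderiv k f)]
  linear_combination -h1

include hx hs ht hu hv in
theorem eval0_pderiv4 (f : MvPolynomial (Fin 5) K) (hf : D f = 0) :
    eval (fun _ => (0:K)) (pderiv 4 f) = 0 := by
  have h1 := congrArg (fun g => eval (fun _ => (0:K)) (pderiv 0 (pderiv 0 g)))
    ((D_expand D hx hs ht hu hv f).symm.trans hf)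
  simp only [pderiv_mul, pderiv_pow, map_add, map_mul, map_zero, pderiv_X_self,
    pderiv_X_of_ne (by decide : (1:Fin 5) ≠ 0), pderiv_X_of_ne (by decide : (2:Fin 5) ≠ 0),
    eval_add, eval_mul, eval_pow, eval_X] at h1
  norm_num at h1
  rcases h1 with h | h
  · exfalso
    rw [map_ofNat] at h
    exact two_ne_zero h
  · simpa using h

theorem deg4_pderiv_zero (f : MvPolynomial (Fin 5) K) (h : degreeOf 4 f = 0) :
    pderiv 4 f = 0 := by
  apply pderiv_eq_zero_of_notMem_vars
  intro hmem
  rw [MvPolynomial.mem_vars] at hmem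
  obtain ⟨d, hd, hd4⟩ := hmem
  have := (MvPolynomial.degreeOf_le_iff.mp h.le) d hd
  rw [Finsupp.mem_support_iff] at hd4
  omega

theorem degreeOf_monomial_le (i : Fin 5) (m : Fin 5 →₀ ℕ) (a : K) :
    degreeOf i (monomial m a : MvPolynomial (Fin 5) K) ≤ m i := by
  rcases eq_or_ne a 0 with rfl | ha
  · simp
  · rw [MvPolynomial.degreeOf_monomial_eq m i ha]

theorem deg4_pderiv_le (f : MvPolynomial (Fin 5) K) (n : ℕ) (h : degreeOf 4 f ≤ n + 1) :
    degreeOf 4 (pderiv 4 f) ≤ n := by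
  conv_lhs => rw [f.as_sum]
  rw [map_sum]
  refine le_trans (MvPolynomial.degreeOf_sum_le _ _ _) ?_
  rw [Finset.sup_le_iff]
  intro m hm
  rw [pderiv_monomial]
  refine le_trans (degreeOf_monomial_le _ _ _) ?_
  have hle := (MvPolynomial.degreeOf_le_iff.mp h) m hm
  simp [Finsupp.tsub_apply, Finsupp.single_apply]
  omega

include hx hs ht hu hv in
theorem step_u (f : MvPolynomial (Fin 5) K) (hf : D f = 0) (t u u' v : K) :
    eval ![(0:K), 0, t, u, v] f = eval ![(0:K), 0, t, u', v] f := by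
  have hflow : ∀ (t : K), t ≠ 0 → ∀ u u' v : K,
      eval ![(0:K), 0, t, u, v] f = eval ![(0:K), 0, t, u', v] f := by
    intro t ht0 u u' v
    have h := flow_eval D hx hs ht hu hv f hf ((u' - u) / t) ![(0:K), 0, t, u, v]
    have hpt : flowK ((u' - u) / t) ![(0:K), 0, t, u, v] = ![(0:K), 0, t, u', v] := by
      funext i
      fin_cases i <;> simp [flowK] <;> field_simp <;> ring
    rw [hpt] at h
    exact h.symm
  rcases eq_or_ne t 0 with rfl | ht0
  · have hPQ : (aeval ![0, 0, Polynomial.X, Polynomial.C u, Polynomial.C v] f : Polynomial K)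
        = aeval ![0, 0, Polynomial.X, Polynomial.C u', Polynomial.C v] f := by
      have hne : ({(0:K)}ᶜ : Set K).Infinite :=
        Set.Finite.infinite_compl (Set.finite_singleton 0)
      rw [← sub_eq_zero]
      apply Polynomial.eq_zero_of_infinite_isRoot
      apply hne.mono
      intro x hx0
      have hx0' : (x : K) ≠ 0 := hx0
      simp only [Set.mem_setOf_eq, Polynomial.IsRoot, Polynomial.eval_sub]
      rw [eval_aeval_curve, eval_aeval_curve]
      have e1 : (fun i => Polynomial.eval x
          (![0, 0, Polynomial.X, Polynomial.C u, Polynomial.C v] i)) = ![(0:K), 0, x, u, v] := by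
        funext i; fin_cases i <;> simp
      have e2 : (fun i => Polynomial.eval x
          (![0, 0, Polynomial.X, Polynomial.C u', Polynomial.C v] i)) = ![(0:K), 0, x, u', v] := by
        funext i; fin_cases i <;> simp
      rw [e1, e2, hflow x hx0']
      ring
    have h0 := congrArg (Polynomial.eval (0:K)) hPQ
    rw [eval_aeval_curve, eval_aeval_curve] at h0
    have e1 : (fun i => Polynomial.eval (0:K)
        (![0, 0, Polynomial.X, Polynomial.C u, Polynomial.C v] i)) = ![(0:K), 0, 0, u, v] := by
      funext i; fin_cases i <;> simp
    have e2 : (fun i => Polynomial.eval (0:K)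
        (![0, 0, Polynomial.X, Polynomial.C u', Polynomial.C v] i)) = ![(0:K), 0, 0, u', v] := by
      funext i; fin_cases i <;> simp
    rw [e1, e2] at h0
    exact h0
  · exact hflow t ht0 u u' v

include hx hs ht hu hv in
theorem step_t (f : MvPolynomial (Fin 5) K) (hf : D f = 0) (t u v : K) :
    eval ![(0:K), 0, t, u, v] f = eval ![(0:K), 0, 0, u, v] f := by
  have hconv : ∀ (A : Fin 5 → Polynomial K) (x : K) (q : Fin 5 → K),
      (∀ i, Polynomial.eval x (A i) = q i) →
      Polynomial.eval x (aeval A f) = eval q f := by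
    intro A x q hq
    rw [eval_aeval_curve]
    rw [show (fun i => Polynomial.eval x (A i)) = q from funext hq]
  have hinf0 : ({(0:K)}ᶜ : Set K).Infinite :=
    Set.Finite.infinite_compl (Set.finite_singleton 0)
  have heven : ∀ w : K, eval ![(0:K), 0, -w, u, v] f = eval ![(0:K), 0, w, u, v] f := by
    intro w
    have hPQ : (aeval ![0, Polynomial.C (2*w) * Polynomial.X, Polynomial.C (-w),
          Polynomial.C u, Polynomial.C v] f : Polynomial K)
        = aeval ![0, Polynomial.C (2*w) * Polynomial.X, Polynomial.C w,
          Polynomial.C u, Polynomial.C v] f := by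
      rw [← sub_eq_zero]
      apply Polynomial.eq_zero_of_infinite_isRoot
      apply hinf0.mono
      intro x hx0
      have hx0' : (x : K) ≠ 0 := hx0
      simp only [Set.mem_setOf_eq, Polynomial.IsRoot, Polynomial.eval_sub]
      rw [hconv ![0, Polynomial.C (2*w) * Polynomial.X, Polynomial.C (-w),
            Polynomial.C u, Polynomial.C v] x ![(0:K), 2*w*x, -w, u, v]
            (by intro i; fin_cases i <;> simp <;> ring),
          hconv ![0, Polynomial.C (2*w) * Polynomial.X, Polynomial.C w,
            Polynomial.C u, Polynomial.C v] x ![(0:K), 2*w*x, w, u, v]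
            (by intro i; fin_cases i <;> simp <;> ring)]
      have hfl := flow_eval D hx hs ht hu hv f hf (1/x) ![(0:K), 2*w*x, -w, u, v]
      have hpt : flowK (1/x) ![(0:K), 2*w*x, -w, u, v] = ![(0:K), 2*w*x, w, u, v] := by
        funext i
        fin_cases i <;> simp [flowK] <;> field_simp <;> ring
      rw [hpt] at hfl
      rw [← hfl]
      ring
    have h0 := congrArg (Polynomial.eval (0:K)) hPQ
    rw [hconv _ 0 ![(0:K), 0, -w, u, v] (by intro i; fin_cases i <;> simp),
      hconv _ 0 ![(0:K), 0, w, u, v] (by intro i; fin_cases i <;> simp)] at h0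
    exact h0
  have hdbl : ∀ γ : K, eval ![(0:K), 0, -(6⁻¹*γ^2), u, v] f
      = eval ![(0:K), 0, 2*(6⁻¹*γ^2), u, v] f := by
    intro γ
    have hPQ : (aeval ![Polynomial.X^2, 0, Polynomial.C (-(6⁻¹*γ^2)),
          Polynomial.C u, Polynomial.C v] f : Polynomial K)
        = aeval ![Polynomial.X^2, Polynomial.C γ * Polynomial.X^3,
          Polynomial.C (2*(6⁻¹*γ^2)), Polynomial.C u,
          Polynomial.C v + Polynomial.C γ * Polynomial.X] f := by
      rw [← sub_eq_zero]
      apply Polynomial.eq_zero_of_infinite_isRoot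
      apply hinf0.mono
      intro x hx0
      have hx0' : (x : K) ≠ 0 := hx0
      simp only [Set.mem_setOf_eq, Polynomial.IsRoot, Polynomial.eval_sub]
      rw [hconv ![Polynomial.X^2, 0, Polynomial.C (-(6⁻¹*γ^2)),
            Polynomial.C u, Polynomial.C v] x ![x^2, (0:K), -(6⁻¹*γ^2), u, v]
            (by intro i; fin_cases i <;> simp <;> ring),
          hconv ![Polynomial.X^2, Polynomial.C γ * Polynomial.X^3,
            Polynomial.C (2*(6⁻¹*γ^2)), Polynomial.C u,
            Polynomial.C v + Polynomial.C γ * Polynomial.X] x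
            ![x^2, γ*x^3, 2*(6⁻¹*γ^2), u, v + γ*x]
            (by intro i; fin_cases i <;> simp <;> ring)]
      have hfl := flow_eval D hx hs ht hu hv f hf (γ/x^3) ![x^2, (0:K), -(6⁻¹*γ^2), u, v]
      have hpt : flowK (γ/x^3) ![x^2, (0:K), -(6⁻¹*γ^2), u, v]
          = ![x^2, γ*x^3, 2*(6⁻¹*γ^2), u, v + γ*x] := by
        funext i
        fin_cases i <;> simp [flowK] <;> field_simp <;> ring
      rw [hpt] at hfl
      rw [← hfl]
      ring
    have h0 := congrArg (Polynomial.eval (0:K)) hPQ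
    rw [hconv _ 0 ![(0:K), 0, -(6⁻¹*γ^2), u, v] (by intro i; fin_cases i <;> simp),
      hconv _ 0 ![(0:K), 0, 2*(6⁻¹*γ^2), u, v] (by intro i; fin_cases i <;> simp)] at h0
    exact h0
  set P : Polynomial K :=
    aeval ![0, 0, Polynomial.X, Polynomial.C u, Polynomial.C v] f with hPdef
  have hP : ∀ w : K, Polynomial.eval w P = eval ![(0:K), 0, w, u, v] f := by
    intro w
    exact hconv _ w ![(0:K), 0, w, u, v] (by intro i; fin_cases i <;> simp)
  have hcomp : P.comp (Polynomial.C 2 * Polynomial.X) = P := by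
    rw [← sub_eq_zero]
    apply Polynomial.eq_zero_of_infinite_isRoot
    apply Set.infinite_of_injective_forall_mem
      (f := fun n : ℕ => (6⁻¹ * (n:K)^2 : K))
    · intro a b hab
      simp only at hab
      have : ((a:K))^2 = (b:K)^2 := by
        field_simp at hab
        exact_mod_cast hab
      have : ((a^2 : ℕ) : K) = ((b^2 : ℕ) : K) := by push_cast; exact this
      have hnat := Nat.cast_injective this
      exact Nat.pow_left_injective (by norm_num) hnat
    · intro n
      simp only [Set.mem_setOf_eq, Polynomial.IsRoot, Polynomial.eval_sub,
        Polynomial.eval_comp, Polynomial.eval_mul, Polynomial.eval_C, Polynomial.eval_X]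
      rw [hP, hP]
      rw [← hdbl (n:K), heven]
      ring_nf
  have hscale : ∀ w : K, Polynomial.eval (2*w) P = Polynomial.eval w P := by
    intro w
    have := congrArg (Polynomial.eval w) hcomp
    rwa [Polynomial.eval_comp, Polynomial.eval_mul, Polynomial.eval_C,
      Polynomial.eval_X] at this
  have hdeg : P.natDegree = 0 := by
    by_contra hn
    have hP0 : P ≠ 0 := fun h => hn (by simp [h])
    have h2 : (Polynomial.C (2:K) * Polynomial.X).natDegree = 1 :=
      Polynomial.natDegree_C_mul_X (2:K) two_ne_zero
    have hlc := Polynomial.leadingCoeff_comp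
      (p := P) (q := Polynomial.C 2 * Polynomial.X) (by rw [h2]; exact one_ne_zero)
    rw [hcomp, Polynomial.leadingCoeff_C_mul_X] at hlc
    have hlc0 : P.leadingCoeff ≠ 0 := Polynomial.leadingCoeff_ne_zero.mpr hP0
    have h21 : (2:K) ^ P.natDegree = 1 := by
      have h1 : P.leadingCoeff * 1 = P.leadingCoeff * 2 ^ P.natDegree := by
        rw [mul_one]; exact hlc
      exact (mul_left_cancel₀ hlc0 h1).symm
    have hcast : ((2^P.natDegree : ℕ) : K) = ((1 : ℕ) : K) := by push_cast; exact h21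
    have hnat := Nat.cast_injective hcast
    rcases Nat.eq_zero_or_pos P.natDegree with h | h
    · exact hn h
    · have h2n : 2 ^ 1 ≤ 2 ^ P.natDegree := Nat.pow_le_pow_right (by norm_num) h
      omega
  obtain ⟨c, hc⟩ : ∃ c, P = Polynomial.C c :=
    ⟨P.coeff 0, Polynomial.eq_C_of_natDegree_eq_zero hdeg⟩
  rw [← hP t, ← hP 0, hc]
  simp

include hx hs ht hu hv in
theorem key_zero_fiber : ∀ (n : ℕ) (f : MvPolynomial (Fin 5) K), D f = 0 →
    degreeOf 4 f ≤ n → ∀ t u v : K,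
    eval ![(0:K), 0, t, u, v] f = eval (fun _ => (0:K)) f := by
  have hconv : ∀ (g : MvPolynomial (Fin 5) K) (x : K) (q : Fin 5 → K),
      (∀ i, Polynomial.eval x ((![0, 0, 0, 0, Polynomial.X] : Fin 5 → Polynomial K) i) = q i) →
      Polynomial.eval x (aeval (![0, 0, 0, 0, Polynomial.X] : Fin 5 → Polynomial K) g)
        = eval q g := by
    intro g x q hq
    rw [eval_aeval_curve]
    rw [show (fun i => Polynomial.eval x ((![0, 0, 0, 0, Polynomial.X] : Fin 5 → Polynomial K) i))
      = q from funext hq]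
  have hder : ∀ (g : MvPolynomial (Fin 5) K),
      Polynomial.derivative (aeval (![0, 0, 0, 0, Polynomial.X] : Fin 5 → Polynomial K) g)
        = aeval (![0, 0, 0, 0, Polynomial.X] : Fin 5 → Polynomial K) (pderiv 4 g) := by
    intro g
    apply derivative_aeval_vcurve
    · simp
    · intro i hi; fin_cases i <;> simp_all
  intro n
  induction n with
  | zero =>
      intro f hf hdeg t u v
      have hstep : eval ![(0:K), 0, t, u, v] f = eval ![(0:K), 0, 0, 0, v] f := by
        rw [step_u D hx hs ht hu hv f hf t u 0 v, step_t D hx hs ht hu hv f hf t 0 v]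
      have hzero : pderiv 4 f = 0 := deg4_pderiv_zero f (Nat.le_zero.mp hdeg)
      have hconst : Polynomial.derivative
          (aeval (![0, 0, 0, 0, Polynomial.X] : Fin 5 → Polynomial K) f) = 0 := by
        rw [hder f, hzero, map_zero]
      obtain ⟨c, hc⟩ : ∃ c, (aeval (![0, 0, 0, 0, Polynomial.X] : Fin 5 → Polynomial K) f)
          = Polynomial.C c :=
        ⟨_, Polynomial.eq_C_of_derivative_eq_zero hconst⟩
      have e1 := hconv f v ![(0:K), 0, 0, 0, v] (by intro i; fin_cases i <;> simp)
      have e2 := hconv f 0 (fun _ => (0:K)) (by intro i; fin_cases i <;> simp)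
      rw [hstep, ← e1, ← e2, hc]
      simp
  | succ n ih =>
      intro f hf hdeg t u v
      have hstep : eval ![(0:K), 0, t, u, v] f = eval ![(0:K), 0, 0, 0, v] f := by
        rw [step_u D hx hs ht hu hv f hf t u 0 v, step_t D hx hs ht hu hv f hf t 0 v]
      have hg : D (pderiv 4 f) = 0 :=
        D_pderiv D hx hs ht hu hv 4
          (by refine ⟨?_, ?_, ?_⟩ <;> exact pderiv_X_of_ne (by decide)) f hf
      have hzero : (aeval (![0, 0, 0, 0, Polynomial.X] : Fin 5 → Polynomial K)
          (pderiv 4 f)) = (0 : Polynomial K) := by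
        apply Polynomial.funext
        intro r
        rw [hconv (pderiv 4 f) r ![(0:K), 0, 0, 0, r] (by intro i; fin_cases i <;> simp),
          ih (pderiv 4 f) hg (deg4_pderiv_le f n hdeg) 0 0 r,
          eval0_pderiv4 D hx hs ht hu hv f hf]
        simp
      have hconst : Polynomial.derivative
          (aeval (![0, 0, 0, 0, Polynomial.X] : Fin 5 → Polynomial K) f) = 0 := by
        rw [hder f, hzero]
      obtain ⟨c, hc⟩ : ∃ c, (aeval (![0, 0, 0, 0, Polynomial.X] : Fin 5 → Polynomial K) f)
          = Polynomial.C c :=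
        ⟨_, Polynomial.eq_C_of_derivative_eq_zero hconst⟩
      have e1 := hconv f v ![(0:K), 0, 0, 0, v] (by intro i; fin_cases i <;> simp)
      have e2 := hconv f 0 (fun _ => (0:K)) (by intro i; fin_cases i <;> simp)
      rw [hstep, ← e1, ← e2, hc]
      simp

end DFAux

theorem daigle_freudenburg_separating_set
    (K : Type*) [Field K] [CharZero K]
    (D : Derivation K (MvPolynomial (Fin 5) K) (MvPolynomial (Fin 5) K))
    (hx : D (X 0) = 0) (hs : D (X 1) = X 0 ^ 3) (ht : D (X 2) = X 1)
    (hu : D (X 3) = X 2) (hv : D (X 4) = X 0 ^ 2)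
    (f₁ f₂ f₃ f₄ f₅ f₆ : MvPolynomial (Fin 5) K)
    (hf₁ : f₁ = X 0)
    (hf₂ : f₂ = 2 * X 0 ^ 3 * X 2 - X 1 ^ 2)
    (hf₃ : f₃ = 3 * X 0 ^ 6 * X 3 - 3 * X 0 ^ 3 * X 2 * X 1 + X 1 ^ 3)
    (hf₄ : f₄ = X 0 * X 4 - X 1)
    (hf₅ : f₅ = X 0 ^ 2 * X 2 * X 1 - X 1 ^ 2 * X 4 + 2 * X 0 ^ 3 * X 2 * X 4
        - 3 * X 0 ^ 5 * X 3)
    (hf₆ : f₆ = -18 * X 0 ^ 3 * X 2 * X 1 * X 3 + 9 * X 0 ^ 6 * X 3 ^ 2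
        + 8 * X 0 ^ 3 * X 2 ^ 3 + 6 * X 1 ^ 3 * X 3 - 3 * X 2 ^ 2 * X 1 ^ 2)
    (p₁ p₂ : Fin 5 → K)
    (h₁ : eval p₁ f₁ = eval p₂ f₁) (h₂ : eval p₁ f₂ = eval p₂ f₂)
    (h₃ : eval p₁ f₃ = eval p₂ f₃) (h₄ : eval p₁ f₄ = eval p₂ f₄)
    (h₅ : eval p₁ f₅ = eval p₂ f₅) (h₆ : eval p₁ f₆ = eval p₂ f₆) :
    ∀ f : MvPolynomial (Fin 5) K, D f = 0 → eval p₁ f = eval p₂ f := by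
  intro f hf
  subst hf₁ hf₂ hf₃ hf₄ hf₅ hf₆
  simp only [map_sub, map_add, map_mul, map_pow, map_neg, map_ofNat, eval_X] at h₁ h₂ h₃ h₄ h₅ h₆
  -- h₁ : p₁ 0 = p₂ 0
  rw [← h₁] at h₂ h₃ h₄ h₅ h₆
  by_cases hx0 : p₁ 0 = 0
  · -- x = 0
    rw [hx0] at h₂ h₃ h₄ h₅ h₆
    simp only [ne_eq, OfNat.ofNat_ne_zero, not_false_eq_true, zero_pow, mul_zero, zero_mul,
      mul_comm] at h₂ h₃ h₄ h₅ h₆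
    -- now h₄ gives p₁ 1 = p₂ 1
    have hs12 : p₁ 1 = p₂ 1 := by linear_combination -h₄
    by_cases hs0 : p₁ 1 = 0
    · -- x = 0, s = 0 : use the kernel fiber theorem
      have hq1 : p₁ = ![(0:K), 0, p₁ 2, p₁ 3, p₁ 4] := by
        funext i; fin_cases i <;> simp [hx0, hs0]
      have hq2 : p₂ = ![(0:K), 0, p₂ 2, p₂ 3, p₂ 4] := by
        funext i; fin_cases i <;> simp [← h₁, hx0, ← hs12, hs0]
      rw [hq1, hq2,
        key_zero_fiber D hx hs ht hu hv (degreeOf 4 f) f hf le_rfl (p₁ 2) (p₁ 3) (p₁ 4),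
        key_zero_fiber D hx hs ht hu hv (degreeOf 4 f) f hf le_rfl (p₂ 2) (p₂ 3) (p₂ 4)]
    · -- x = 0, s ≠ 0 : exact flow
      rw [← hs12] at h₅ h₆
      obtain ⟨c, hcs⟩ : ∃ c : K, c * p₁ 1 = p₂ 2 - p₁ 2 :=
        ⟨(p₂ 2 - p₁ 2) / p₁ 1, div_mul_cancel₀ _ hs0⟩
      have hcs2 : c ^ 2 * p₁ 1 ^ 2 = (p₂ 2 - p₁ 2) ^ 2 := by
        rw [← hcs]; ring
      have hp : p₂ = flowK c p₁ := by
        funext i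
        fin_cases i
        · simpa [flowK] using h₁.symm
        · simp [flowK, hx0]
          exact hs12.symm
        · simp [flowK, hx0]
          linear_combination -hcs
        · have hm : 6 * p₁ 1 ^ 3 * p₂ 3
              = 6 * p₁ 1 ^ 3 * (p₁ 3 + p₁ 2 * c + 2⁻¹ * p₁ 1 * c ^ 2) := by
            linear_combination (-1 : K) * h₆ + (-6 * p₁ 2 * p₁ 1 ^ 2) * hcs
              + (-3 * p₁ 1 ^ 2) * hcs2
          have h6s : (6 : K) * p₁ 1 ^ 3 ≠ 0 :=
            mul_ne_zero (by norm_num) (pow_ne_zero _ hs0)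
          have hkey := mul_left_cancel₀ h6s hm
          simp [flowK, hx0]
          linear_combination hkey
        · have hm : p₁ 1 ^ 2 * p₁ 4 = p₁ 1 ^ 2 * p₂ 4 := by
            linear_combination -h₅
          have hkey := mul_left_cancel₀ (pow_ne_zero 2 hs0) hm
          simp [flowK, hx0]
          linear_combination -hkey
      rw [hp]
      exact (flow_eval D hx hs ht hu hv f hf c p₁).symm
  · -- x ≠ 0
    have hx3 : (p₁ 0) ^ 3 ≠ 0 := pow_ne_zero _ hx0
    obtain ⟨c, hcx⟩ : ∃ c : K, c * (p₁ 0) ^ 3 = p₂ 1 - p₁ 1 :=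
      ⟨(p₂ 1 - p₁ 1) / (p₁ 0) ^ 3, div_mul_cancel₀ _ hx3⟩
    have hcx2 : c ^ 2 * (p₁ 0) ^ 6 = (p₂ 1 - p₁ 1) ^ 2 := by
      rw [← hcx]; ring
    have hcx3 : c ^ 3 * (p₁ 0) ^ 9 = (p₂ 1 - p₁ 1) ^ 3 := by
      rw [← hcx]; ring
    have hp : p₂ = flowK c p₁ := by
      funext i
      fin_cases i
      · simpa [flowK] using h₁.symm
      · simp [flowK]
        linear_combination -hcx
      · have hm : 2 * p₁ 0 ^ 3 * p₂ 2
            = 2 * p₁ 0 ^ 3 * (p₁ 2 + p₁ 1 * c + 2⁻¹ * p₁ 0 ^ 3 * c ^ 2) := by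
          linear_combination (-1 : K) * h₂ + (-2 * p₁ 1) * hcx + (-1 : K) * hcx2
        have h2x : (2 : K) * p₁ 0 ^ 3 ≠ 0 := mul_ne_zero (by norm_num) hx3
        have hkey := mul_left_cancel₀ h2x hm
        simp [flowK]
        linear_combination hkey
      · have hm : 6 * p₁ 0 ^ 9 * p₂ 3
            = 6 * p₁ 0 ^ 9 * (p₁ 3 + p₁ 2 * c + 2⁻¹ * p₁ 1 * c ^ 2 + 6⁻¹ * p₁ 0 ^ 3 * c ^ 3) := by
          linear_combination (-2 * p₁ 0 ^ 3) * h₃ + (-3 * p₁ 0 ^ 3 * p₂ 1) * h₂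
            + (-6 * p₁ 2 * p₁ 0 ^ 6) * hcx + (-3 * p₁ 1 * p₁ 0 ^ 3) * hcx2
            + (-(p₁ 0 ^ 3)) * hcx3
        have h6x : (6 : K) * p₁ 0 ^ 9 ≠ 0 := mul_ne_zero (by norm_num) (pow_ne_zero _ hx0)
        have hkey := mul_left_cancel₀ h6x hm
        simp [flowK]
        linear_combination hkey
      · have hm : p₁ 0 * p₂ 4 = p₁ 0 * (p₁ 4 + p₁ 0 ^ 2 * c) := by
          linear_combination (-1 : K) * h₄ + (-1 : K) * hcx
        have hkey := mul_left_cancel₀ hx0 hm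
        simp [flowK]
        linear_combination hkey
    rw [hp]
    exact (flow_eval D hx hs ht hu hv f hf c p₁).symm
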